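/- Let m ≥ 1 and S ≥ 1 be integers and let X_0, X_1, …, X_m be random variables on a common probability space, each taking values in {0,1} (not necessarily independent). Then ∏_{i=0}^{m} P(X_i = 0)^S ≤ P(X_i = 0 for all i = 0,…,m) + (m/(m+1))^{(m+1)S}. -/

import Mathlib

open MeasureTheory

/-- Key real-valued inequality. -/
lemma key_real (m S : ℕ) (hm : 1 ≤ m) (hS : 1 ≤ S) (q : Fin (m + 1) → ℝ)
    (h0 : ∀ i, 0 ≤ q i) (h1 : ∀ i, q i ≤ 1) (r : ℝ) (hr : 0 ≤ r)
    (hu : 1 - ∑ i, (1 - q i) ≤ r) :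
    ∏ i, q i ^ S ≤ r + ((m : ℝ) / (m + 1)) ^ ((m + 1) * S) := by
  have hm1 : (0 : ℝ) < (m : ℝ) + 1 := by positivity
  set c : ℝ := (m : ℝ) / (m + 1) with hc
  have hc0 : 0 ≤ c := by positivity
  have hc1 : c ≤ 1 := by
    rw [hc, div_le_one hm1]; linarith
  set Q : ℝ := ∏ i, q i with hQ
  have hQ0 : 0 ≤ Q := Finset.prod_nonneg fun i _ => h0 i
  set qbar : ℝ := (∑ i, q i) / ((m : ℝ) + 1) with hqbar
  have hqbar0 : 0 ≤ qbar := by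
    apply div_nonneg _ hm1.le
    exact Finset.sum_nonneg fun i _ => h0 i
  have hqbar1 : qbar ≤ 1 := by
    rw [hqbar, div_le_one hm1]
    calc ∑ i, q i ≤ ∑ _i : Fin (m + 1), (1 : ℝ) :=
          Finset.sum_le_sum fun i _ => h1 i
      _ = (m : ℝ) + 1 := by simp
  -- AM-GM: Q ≤ qbar ^ (m+1)
  have amgm : Q ≤ qbar ^ (m + 1) := by
    have h := Real.geom_mean_le_arith_mean (Finset.univ : Finset (Fin (m + 1)))
      (fun _ => (1 : ℝ)) q (fun i _ => zero_le_one)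
      (by simp [Finset.card_univ]; positivity) (fun i _ => h0 i)
    simp only [Real.rpow_one, one_mul, Finset.sum_const, Finset.card_univ,
      Fintype.card_fin, nsmul_eq_mul, mul_one] at h
    -- h : Q ^ ((m+1:ℝ))⁻¹ ≤ (∑ q) / (m+1)
    have h' : (Q ^ (((m : ℝ) + 1))⁻¹) ^ (m + 1) ≤ qbar ^ (m + 1) := by
      apply pow_le_pow_left₀ (Real.rpow_nonneg hQ0 _)
      push_cast at h ⊢
      exact h
    calc Q = (Q ^ (((m : ℝ) + 1))⁻¹) ^ (m + 1) := by
            rw [← Real.rpow_natCast (Q ^ (((m : ℝ) + 1))⁻¹) (m + 1),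
              ← Real.rpow_mul hQ0]
            rw [Nat.cast_add, Nat.cast_one, inv_mul_cancel₀ hm1.ne', Real.rpow_one]
      _ ≤ qbar ^ (m + 1) := h'
  have step1 : ∏ i, q i ^ S ≤ qbar ^ ((m + 1) * S) := by
    calc ∏ i, q i ^ S = Q ^ S := by rw [hQ, ← Finset.prod_pow]
      _ ≤ (qbar ^ (m + 1)) ^ S := pow_le_pow_left₀ hQ0 amgm S
      _ = qbar ^ ((m + 1) * S) := by rw [← pow_mul]
  -- bound qbar ^ ((m+1)*S)
  have lam_eq : ((m : ℝ) + 1) * qbar - m = 1 - ∑ i, (1 - q i) := by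
    rw [hqbar, mul_div_cancel₀ _ hm1.ne']
    rw [Finset.sum_sub_distrib]
    simp [Finset.card_univ]
    push_cast; ring
  rcases le_or_gt qbar c with hcase | hcase
  · calc ∏ i, q i ^ S ≤ qbar ^ ((m + 1) * S) := step1
      _ ≤ c ^ ((m + 1) * S) := pow_le_pow_left₀ hqbar0 hcase _
      _ ≤ r + c ^ ((m + 1) * S) := le_add_of_nonneg_left hr
  · set lam : ℝ := ((m : ℝ) + 1) * (qbar - c) with hlam
    have hlam0 : 0 ≤ lam := by
      apply mul_nonneg hm1.le; linarith
    have hmc : ((m : ℝ) + 1) * c = m := by rw [hc]; field_simp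
    have hlam1 : lam ≤ 1 := by
      rw [hlam]; nlinarith
    have hcomb : (1 - lam) * c + lam = qbar := by
      rw [hlam, hc]; field_simp; ring
    have hconv := (convexOn_pow (𝕜 := ℝ) ((m + 1) * S)).2
      (Set.mem_Ici.mpr hc0) (Set.mem_Ici.mpr zero_le_one)
      (by linarith : (0:ℝ) ≤ 1 - lam) hlam0 (by ring)
    simp only [smul_eq_mul, one_pow, mul_one] at hconv
    rw [hcomb] at hconv
    -- hconv : qbar ^ ((m+1)*S) ≤ (1 - lam) * c ^ ((m+1)*S) + lam
    have hlamr : lam ≤ r := by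
      rw [hlam, mul_sub, hmc]
      linarith [lam_eq]
    have : (1 - lam) * c ^ ((m + 1) * S) ≤ c ^ ((m + 1) * S) := by
      nlinarith [pow_nonneg hc0 ((m + 1) * S)]
    calc ∏ i, q i ^ S ≤ qbar ^ ((m + 1) * S) := step1
      _ ≤ (1 - lam) * c ^ ((m + 1) * S) + lam := hconv
      _ ≤ c ^ ((m + 1) * S) + r := by linarith
      _ = r + c ^ ((m + 1) * S) := add_comm _ _

/-- Lemma 4.7: for `{0,1}`-valued random variables `X_0, …, X_m` (not necessarily
independent) on a probability space, `∏ i P(X_i = 0)^S ≤ P(∀ i, X_i = 0) + (m/(m+1))^((m+1)S)`. -/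
theorem lemma_4_7 {Ω : Type*} [MeasurableSpace Ω] (P : Measure Ω) [IsProbabilityMeasure P]
    (m S : ℕ) (hm : 1 ≤ m) (hS : 1 ≤ S)
    (X : Fin (m + 1) → Ω → Bool) (hX : ∀ i, Measurable (X i)) :
    ∏ i : Fin (m + 1), (P {ω | X i ω = false}) ^ S
      ≤ P {ω | ∀ i, X i ω = false} + ((m : ENNReal) / (m + 1)) ^ ((m + 1) * S) := by
  set A : Fin (m + 1) → Set Ω := fun i => {ω | X i ω = false} with hA
  have hAmeas : ∀ i, MeasurableSet (A i) := fun i =>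
    (hX i) (by trivial : MeasurableSet {false})
  have hT : {ω | ∀ i, X i ω = false} = ⋂ i, A i := by
    ext ω; simp [hA, Set.mem_iInter]
  set q : Fin (m + 1) → ℝ := fun i => (P (A i)).toReal with hq
  have hq0 : ∀ i, 0 ≤ q i := fun i => ENNReal.toReal_nonneg
  have hq1 : ∀ i, q i ≤ 1 := fun i => by
    rw [hq]
    simpa using ENNReal.toReal_mono ENNReal.one_ne_top prob_le_one
  set r : ℝ := (P (⋂ i, A i)).toReal with hr
  -- union bound
  have hub : (1 : ENNReal) ≤ P (⋂ i, A i) + ∑ i, P ((A i)ᶜ) := by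
    have h1 : (1 : ENNReal) = P ((⋂ i, A i) ∪ ⋃ i, (A i)ᶜ) := by
      rw [show ((⋂ i, A i) ∪ ⋃ i, (A i)ᶜ) = Set.univ by
        rw [← Set.compl_iInter]; exact Set.union_compl_self _]
      simp
    calc (1 : ENNReal) = P ((⋂ i, A i) ∪ ⋃ i, (A i)ᶜ) := h1
      _ ≤ P (⋂ i, A i) + P (⋃ i, (A i)ᶜ) := measure_union_le _ _
      _ ≤ P (⋂ i, A i) + ∑ i, P ((A i)ᶜ) := by
          gcongr
          exact measure_iUnion_fintype_le P _
  have hcompl : ∀ i, (P ((A i)ᶜ)).toReal = 1 - q i := fun i => by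
    rw [measure_compl (hAmeas i) (measure_ne_top P _), measure_univ]
    rw [ENNReal.toReal_sub_of_le prob_le_one ENNReal.one_ne_top]
    simp [hq]
  have hu : 1 - ∑ i, (1 - q i) ≤ r := by
    have hfin : P (⋂ i, A i) + ∑ i, P ((A i)ᶜ) ≠ ⊤ := by
      apply ENNReal.add_ne_top.mpr
      exact ⟨measure_ne_top P _, by
        apply (ENNReal.sum_lt_top.mpr fun i _ => (measure_lt_top P _)).ne⟩
    have := ENNReal.toReal_mono hfin hub
    rw [ENNReal.toReal_one, ENNReal.toReal_add (measure_ne_top P _)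
      (by exact (ENNReal.sum_lt_top.mpr fun i _ => measure_lt_top P _).ne),
      ENNReal.toReal_sum (fun i _ => measure_ne_top P _)] at this
    simp only [hcompl] at this
    rw [hr]; linarith
  have key := key_real m S hm hS q hq0 hq1 r ENNReal.toReal_nonneg hu
  -- transfer to ENNReal
  have hLfin : ∏ i : Fin (m + 1), (P (A i)) ^ S ≠ ⊤ := by
    apply (ENNReal.prod_lt_top fun i _ => ?_).ne
    exact ENNReal.pow_lt_top (measure_lt_top P _)
  have hcfin : ((m : ENNReal) / (m + 1)) ^ ((m + 1) * S) ≠ ⊤ := by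
    apply ENNReal.pow_ne_top
    exact (ENNReal.div_lt_top (ENNReal.natCast_ne_top m) (by simp)).ne
  have hRfin : P (⋂ i, A i) + ((m : ENNReal) / (m + 1)) ^ ((m + 1) * S) ≠ ⊤ :=
    ENNReal.add_ne_top.mpr ⟨measure_ne_top P _, hcfin⟩
  rw [hT]
  rw [← ENNReal.toReal_le_toReal hLfin hRfin]
  rw [ENNReal.toReal_prod, ENNReal.toReal_add (measure_ne_top P _) hcfin,
    ENNReal.toReal_pow, ENNReal.toReal_div]
  have hden : (((m : ENNReal) + 1)).toReal = (m : ℝ) + 1 := by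
    rw [ENNReal.toReal_add (ENNReal.natCast_ne_top m) ENNReal.one_ne_top]; simp
  simp only [ENNReal.toReal_pow, ENNReal.toReal_natCast, hden]
  convert key using 2
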